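/- Let f₁, f₂ be holomorphic functions on a domain in ℂ, and let ω = f₁(z)f₂(z̄)dz, written as ω = f dx + g dy with f(x,y) = f₁(x+iy)f₂(x−iy) and g = i·f. Let RC^{λ+1,λ−1}_a(x,y) = Σ_ℓ r_ℓ x^{a−ℓ}y^ℓ, and let D₁, D₂ be the real constant-coefficient operators with D₁ + i D₂ = 2^{−a} RC^{λ+1,λ−1}_a(∂/∂x − i∂/∂y, ∂/∂x + i∂/∂y). Then (D₁f)(x,0) + (D₂g)(x,0) = Σ_{ℓ=0}^a r_ℓ · f₁^{(a−ℓ)}(x)·f₂^{(ℓ)}(x) for x real. -/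

import Mathlib

noncomputable section
open Complex

/-- Generalized binomial coefficient `C(μ, k) = μ(μ−1)⋯(μ−k+1)/k!`. -/
def gbinom (μ : ℂ) (k : ℕ) : ℂ := (∏ i ∈ Finset.range k, (μ - i)) / (k.factorial : ℂ)

/-- The Rankin–Cohen coefficient `r_ℓ = (−1)^ℓ C(λ₁+a−1, ℓ) C(λ₂+a−1, a−ℓ)`. -/
def rcCoeff (a : ℕ) (l1 l2 : ℂ) (ℓ : ℕ) : ℂ :=
  (-1 : ℂ) ^ ℓ * gbinom (l1 + a - 1) ℓ * gbinom (l2 + a - 1) (a - ℓ)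

/-- The operator `∂/∂x − i ∂/∂y` acting on functions on `ℝ²`. -/
def opA (F : ℝ × ℝ → ℂ) : ℝ × ℝ → ℂ :=
  fun p => fderiv ℝ F p (1, 0) - Complex.I * fderiv ℝ F p (0, 1)

/-- The operator `∂/∂x + i ∂/∂y` acting on functions on `ℝ²`. -/
def opB (F : ℝ × ℝ → ℂ) : ℝ × ℝ → ℂ :=
  fun p => fderiv ℝ F p (1, 0) + Complex.I * fderiv ℝ F p (0, 1)

/-- The real-linear map `(x, y) ↦ x + y i`. -/
def Lz : (ℝ × ℝ) →L[ℝ] ℂ :=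
  Complex.ofRealCLM.comp (ContinuousLinearMap.fst ℝ ℝ ℝ) +
    Complex.I • Complex.ofRealCLM.comp (ContinuousLinearMap.snd ℝ ℝ ℝ)

/-- The real-linear map `(x, y) ↦ x − y i`. -/
def Lw : (ℝ × ℝ) →L[ℝ] ℂ :=
  Complex.ofRealCLM.comp (ContinuousLinearMap.fst ℝ ℝ ℝ) -
    Complex.I • Complex.ofRealCLM.comp (ContinuousLinearMap.snd ℝ ℝ ℝ)

lemma Lz_apply (v : ℝ × ℝ) : Lz v = (v.1 : ℂ) + v.2 * Complex.I := by
  simp [Lz]; ring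

lemma Lw_apply (v : ℝ × ℝ) : Lw v = (v.1 : ℂ) - v.2 * Complex.I := by
  simp [Lw]; ring

lemma key_fderiv (φ ψ : ℂ → ℂ) (p : ℝ × ℝ)
    (hφ : DifferentiableAt ℂ φ (Lz p)) (hψ : DifferentiableAt ℂ ψ (Lw p)) :
    HasFDerivAt (fun q => φ (Lz q) * ψ (Lw q))
      (φ (Lz p) • (deriv ψ (Lw p) • (Lw : (ℝ × ℝ) →L[ℝ] ℂ)) +
        ψ (Lw p) • (deriv φ (Lz p) • (Lz : (ℝ × ℝ) →L[ℝ] ℂ))) p := by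
  have h1 : HasFDerivAt (fun q => φ (Lz q)) (deriv φ (Lz p) • (Lz : (ℝ × ℝ) →L[ℝ] ℂ)) p :=
    (hφ.hasDerivAt).comp_hasFDerivAt p Lz.hasFDerivAt
  have h2 : HasFDerivAt (fun q => ψ (Lw q)) (deriv ψ (Lw p) • (Lw : (ℝ × ℝ) →L[ℝ] ℂ)) p :=
    (hψ.hasDerivAt).comp_hasFDerivAt p Lw.hasFDerivAt
  exact h1.mul h2

lemma opA_prod (φ ψ : ℂ → ℂ) (p : ℝ × ℝ)
    (hφ : DifferentiableAt ℂ φ (Lz p)) (hψ : DifferentiableAt ℂ ψ (Lw p)) :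
    opA (fun q => φ (Lz q) * ψ (Lw q)) p = 2 * (deriv φ (Lz p) * ψ (Lw p)) := by
  have h := (key_fderiv φ ψ p hφ hψ).fderiv
  simp only [opA]
  rw [h]
  simp only [ContinuousLinearMap.add_apply, ContinuousLinearMap.smul_apply,
    smul_eq_mul, Lz_apply, Lw_apply]
  push_cast
  ring_nf
  rw [Complex.I_sq]
  ring

lemma opB_prod (φ ψ : ℂ → ℂ) (p : ℝ × ℝ)
    (hφ : DifferentiableAt ℂ φ (Lz p)) (hψ : DifferentiableAt ℂ ψ (Lw p)) :
    opB (fun q => φ (Lz q) * ψ (Lw q)) p = 2 * (φ (Lz p) * deriv ψ (Lw p)) := by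
  have h := (key_fderiv φ ψ p hφ hψ).fderiv
  simp only [opB]
  rw [h]
  simp only [ContinuousLinearMap.add_apply, ContinuousLinearMap.smul_apply,
    smul_eq_mul, Lz_apply, Lw_apply]
  push_cast
  ring_nf
  rw [Complex.I_sq]
  ring

lemma opA_congr {G H : ℝ × ℝ → ℂ} {V : Set (ℝ × ℝ)} (hV : IsOpen V)
    (hGH : Set.EqOn G H V) {p : ℝ × ℝ} (hp : p ∈ V) : opA G p = opA H p := by
  have h : G =ᶠ[nhds p] H := Filter.eventuallyEq_of_mem (hV.mem_nhds hp) hGH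
  simp [opA, h.fderiv_eq]

lemma opB_congr {G H : ℝ × ℝ → ℂ} {V : Set (ℝ × ℝ)} (hV : IsOpen V)
    (hGH : Set.EqOn G H V) {p : ℝ × ℝ} (hp : p ∈ V) : opB G p = opB H p := by
  have h : G =ᶠ[nhds p] H := Filter.eventuallyEq_of_mem (hV.mem_nhds hp) hGH
  simp [opB, h.fderiv_eq]

/-- Lemma on the restriction of the Rankin–Cohen bracket to the real form: if `D₁, D₂` are
the operators with `D₁ + i D₂ = 2^{−a} RC^{λ+1,λ−1}_a(∂/∂x − i∂/∂y, ∂/∂x + i∂/∂y)`, and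
`ω = f₁(z) f₂(z̄) dz = f dx + g dy` (so `f(x,y) = f₁(x+iy) f₂(x−iy)`, `g = i f`), then
`(D₁ f)(x,0) + (D₂ g)(x,0) = Σ_ℓ r_ℓ f₁^{(a−ℓ)}(x) f₂^{(ℓ)}(x)` for real `x`. -/
theorem rankin_cohen_restriction (a : ℕ) (lam : ℂ) (U : Set ℂ) (hU : IsOpen U)
    (f₁ f₂ : ℂ → ℂ) (h₁ : DifferentiableOn ℂ f₁ U) (h₂ : DifferentiableOn ℂ f₂ U)
    (D₁ D₂ : ((ℝ × ℝ) → ℂ) →ₗ[ℂ] ((ℝ × ℝ) → ℂ))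
    (hD : ∀ F : (ℝ × ℝ) → ℂ,
      D₁ F + Complex.I • D₂ F =
        ((2 : ℂ) ^ a)⁻¹ • ∑ ℓ ∈ Finset.range (a + 1),
          rcCoeff a (lam + 1) (lam - 1) ℓ • opA^[a - ℓ] (opB^[ℓ] F))
    (f g : (ℝ × ℝ) → ℂ)
    (hf : f = fun p : ℝ × ℝ => f₁ ((p.1 : ℂ) + p.2 * Complex.I) *
      f₂ ((p.1 : ℂ) - p.2 * Complex.I))
    (hg : g = fun p => Complex.I * f p)
    (x : ℝ) (hx : (x : ℂ) ∈ U) :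
    D₁ f (x, 0) + D₂ g (x, 0)
      = ∑ ℓ ∈ Finset.range (a + 1),
          rcCoeff a (lam + 1) (lam - 1) ℓ * iteratedDeriv (a - ℓ) f₁ (x : ℂ) *
            iteratedDeriv ℓ f₂ (x : ℂ) := by
  classical
  -- analytic continuation of derivatives
  have A1 : ∀ n, AnalyticOnNhd ℂ (iteratedDeriv n f₁) U := by
    intro n; induction n with
    | zero => simpa [iteratedDeriv_zero] using h₁.analyticOnNhd hU
    | succ n ih => rw [iteratedDeriv_succ]; exact ih.deriv
  have A2 : ∀ n, AnalyticOnNhd ℂ (iteratedDeriv n f₂) U := by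
    intro n; induction n with
    | zero => simpa [iteratedDeriv_zero] using h₂.analyticOnNhd hU
    | succ n ih => rw [iteratedDeriv_succ]; exact ih.deriv
  have d1 : ∀ n, ∀ z ∈ U, DifferentiableAt ℂ (iteratedDeriv n f₁) z :=
    fun n z hz => (A1 n z hz).differentiableAt
  have d2 : ∀ n, ∀ z ∈ U, DifferentiableAt ℂ (iteratedDeriv n f₂) z :=
    fun n z hz => (A2 n z hz).differentiableAt
  set V : Set (ℝ × ℝ) := (fun p => Lz p) ⁻¹' U ∩ (fun p => Lw p) ⁻¹' U with hVdef
  have hVopen : IsOpen V :=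
    (hU.preimage Lz.continuous).inter (hU.preimage Lw.continuous)
  have hpV : ((x, 0) : ℝ × ℝ) ∈ V := by
    constructor <;> simp [Set.mem_preimage, Lz_apply, Lw_apply, hx]
  have hmemz : ∀ p ∈ V, Lz p ∈ U := fun p hp => hp.1
  have hmemw : ∀ p ∈ V, Lw p ∈ U := fun p hp => hp.2
  -- the family of functions
  set G : ℂ → ℕ → ℕ → (ℝ × ℝ → ℂ) :=
    fun c m ℓ p => c * iteratedDeriv m f₁ (Lz p) * iteratedDeriv ℓ f₂ (Lw p) with hGdef
  have stepA : ∀ (c : ℂ) (m ℓ : ℕ) (p : ℝ × ℝ), p ∈ V →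
      opA (G c m ℓ) p = G (2 * c) (m + 1) ℓ p := by
    intro c m ℓ p hp
    have hφ : DifferentiableAt ℂ (fun z => c * iteratedDeriv m f₁ z) (Lz p) :=
      (d1 m _ (hmemz p hp)).const_mul c
    have h := opA_prod (fun z => c * iteratedDeriv m f₁ z) (iteratedDeriv ℓ f₂) p hφ
      (d2 ℓ _ (hmemw p hp))
    have hder : deriv (fun z => c * iteratedDeriv m f₁ z) (Lz p)
        = c * iteratedDeriv (m + 1) f₁ (Lz p) := by
      rw [deriv_const_mul c (d1 m _ (hmemz p hp)), ← iteratedDeriv_succ]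
    simp only [hGdef]
    rw [show (fun q => (fun z => c * iteratedDeriv m f₁ z) (Lz q)
        * iteratedDeriv ℓ f₂ (Lw q)) = fun q => c * iteratedDeriv m f₁ (Lz q)
        * iteratedDeriv ℓ f₂ (Lw q) from rfl] at h
    rw [h, hder]; ring
  have stepB : ∀ (c : ℂ) (m ℓ : ℕ) (p : ℝ × ℝ), p ∈ V →
      opB (G c m ℓ) p = G (2 * c) m (ℓ + 1) p := by
    intro c m ℓ p hp
    have hφ : DifferentiableAt ℂ (fun z => c * iteratedDeriv m f₁ z) (Lz p) :=
      (d1 m _ (hmemz p hp)).const_mul c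
    have h := opB_prod (fun z => c * iteratedDeriv m f₁ z) (iteratedDeriv ℓ f₂) p hφ
      (d2 ℓ _ (hmemw p hp))
    have hder : deriv (iteratedDeriv ℓ f₂) (Lw p) = iteratedDeriv (ℓ + 1) f₂ (Lw p) := by
      rw [← iteratedDeriv_succ]
    rw [show (fun q => (fun z => c * iteratedDeriv m f₁ z) (Lz q)
        * iteratedDeriv ℓ f₂ (Lw q)) = fun q => c * iteratedDeriv m f₁ (Lz q)
        * iteratedDeriv ℓ f₂ (Lw q) from rfl] at h
    simp only [hGdef]
    rw [h, hder]; ring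
  -- iterating opB
  have hB : ∀ ℓ : ℕ, Set.EqOn (opB^[ℓ] f) (G ((2 : ℂ) ^ ℓ) 0 ℓ) V := by
    intro ℓ; induction ℓ with
    | zero =>
      intro p hp
      simp [hf, hGdef, iteratedDeriv_zero, Lz_apply, Lw_apply]
    | succ ℓ ih =>
      intro p hp
      rw [Function.iterate_succ_apply']
      rw [show opB (opB^[ℓ] f) p = opB (G ((2 : ℂ) ^ ℓ) 0 ℓ) p from
        opB_congr hVopen ih hp]
      rw [stepB _ _ _ _ hp]
      simp only [hGdef]
      ring
  -- then iterating opA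
  have hAB : ∀ (m ℓ : ℕ), Set.EqOn (opA^[m] (opB^[ℓ] f)) (G ((2 : ℂ) ^ (m + ℓ)) m ℓ) V := by
    intro m ℓ; induction m with
    | zero =>
      simpa using hB ℓ
    | succ m ih =>
      intro p hp
      rw [Function.iterate_succ_apply']
      rw [show opA (opA^[m] (opB^[ℓ] f)) p = opA (G ((2 : ℂ) ^ (m + ℓ)) m ℓ) p from
        opA_congr hVopen ih hp]
      rw [stepA _ _ _ _ hp]
      simp only [hGdef]
      ring
  -- assemble
  have hg' : g = Complex.I • f := by
    funext p; simp [hg, Pi.smul_apply, smul_eq_mul]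
  have hL : D₁ f (x, 0) + D₂ g (x, 0) = (D₁ f + Complex.I • D₂ f) ((x : ℝ), (0 : ℝ)) := by
    rw [hg', map_smul]
    simp [Pi.add_apply, Pi.smul_apply, smul_eq_mul]
  rw [hL, hD f]
  simp only [Pi.smul_apply, Finset.sum_apply, smul_eq_mul]
  rw [Finset.mul_sum]
  refine Finset.sum_congr rfl fun ℓ hℓ => ?_
  rw [hAB (a - ℓ) ℓ hpV]
  have hsum : (a - ℓ) + ℓ = a := Nat.sub_add_cancel (Nat.le_of_lt_succ (Finset.mem_range.mp hℓ))
  have h2 : ((2 : ℂ) ^ a) ≠ 0 := pow_ne_zero _ two_ne_zero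
  simp only [hGdef, hsum]
  have hz0 : Lz ((x : ℝ), (0 : ℝ)) = (x : ℂ) := by simp [Lz_apply]
  have hw0 : Lw ((x : ℝ), (0 : ℝ)) = (x : ℂ) := by simp [Lw_apply]
  rw [hz0, hw0]
  field_simp
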